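/- Let g: D_{m,1} → ℕ be the ℓ=1 D-LOCO encoding-decoding rule. Then g is a bijection from D_{m,1} onto {0, 1, ..., 4·3^(m-1) - 1}, and g is strictly increasing with respect to the lexicographic order on D_{m,1} (with symbol significance decreasing from left to right and A < T < G < C). -/

import Mathlib

/-- Extension of a word `w` in `{A,T,G,C}^m` (symbols identified with `Fin 4`,
`A<T<G<C` corresponding to `0<1<2<3`) to all of `Nat`, with the convention that
out-of-bounds symbols are `C = 3`. Position `i` carries significance `3^i`
(significance decreases from left to right in the word `c_{m-1} ... c_0`). -/
def ext (m : ℕ) (w : Fin m → Fin 4) (i : ℕ) : Fin 4 :=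
  if h : i < m then w ⟨i, h⟩ else 3

/-- The `i`-th symbol contribution for the `ℓ = 1` D-LOCO rule:
`|{Δ ∈ {0,1,2} : Δ < c_i ∧ c_{i+1} ≠ Δ}| * 3^i`. -/
def contrib (m : ℕ) (w : Fin m → Fin 4) (i : ℕ) : ℕ :=
  (Finset.univ.filter fun Δ : Fin 4 => Δ < ext m w i ∧ ext m w (i + 1) ≠ Δ).card * 3 ^ i

/-- The (formal) index of a word under the `ℓ = 1` D-LOCO encoding-decoding rule. -/
def gidx (m : ℕ) (w : Fin m → Fin 4) : ℕ := ∑ i ∈ Finset.range m, contrib m w i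

/-- Membership in `D_{m,1}`: no two adjacent equal symbols (no run of length 2). -/
def noAdj (m : ℕ) (w : Fin m → Fin 4) : Prop :=
  ∀ i : ℕ, i + 1 < m → ext m w (i + 1) ≠ ext m w i

/-- Lexicographic order on words, with symbol significance decreasing from left
to right, i.e., increasing with the position index `i` of `c_i`. -/
def lexLt (m : ℕ) (c w : Fin m → Fin 4) : Prop :=
  ∃ j : Fin m, c j < w j ∧ ∀ k : Fin m, j < k → c k = w k

/-! ### Auxiliary machinery -/

/-- The count `|{Δ : Δ < c ∧ e ≠ Δ}|`. -/
def cnt (e c : Fin 4) : ℕ :=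
  (Finset.univ.filter fun Δ : Fin 4 => Δ < c ∧ e ≠ Δ).card

lemma contrib_eq (m : ℕ) (w : Fin m → Fin 4) (i : ℕ) :
    contrib m w i = cnt (ext m w (i + 1)) (ext m w i) * 3 ^ i := rfl

lemma cnt_le_two : ∀ e c : Fin 4, e ≠ c → cnt e c ≤ 2 := by decide

lemma cnt_lt : ∀ e c w : Fin 4, e ≠ c → c < w → cnt e c + 1 ≤ cnt e w := by decide

lemma cnt_three : ∀ c : Fin 4, cnt 3 c = c.val := by decide

/-- The symbol strictly below an excluded symbol `e`, given a digit `a ∈ {0,1,2}`. -/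
def nxt (e : Fin 4) (a : Fin 3) : Fin 4 :=
  if (a : ℕ) < (e : ℕ) then a.castSucc else a.succ

lemma nxt_ne : ∀ (e : Fin 4) (a : Fin 3), nxt e a ≠ e := by decide

lemma cnt_nxt : ∀ (e : Fin 4) (a : Fin 3), cnt e (nxt e a) = a.val := by decide

/-- The `i`-th base-3 digit of `n`. -/
def dig (n i : ℕ) : Fin 3 := ⟨n / 3 ^ i % 3, by omega⟩

/-- Decoded symbols, from the most significant position down:
`symb m n j` is the symbol at position `m - 1 - j`. -/
def symb (m n : ℕ) : ℕ → Fin 4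
  | 0 => ⟨n / 3 ^ (m - 1) % 4, by omega⟩
  | j + 1 => nxt (symb m n j) (dig n (m - 2 - j))

/-- The decoded word. -/
def dec (m n : ℕ) : Fin m → Fin 4 := fun i => symb m n (m - 1 - i.val)

lemma ext_lt (m : ℕ) (w : Fin m → Fin 4) {i : ℕ} (h : i < m) :
    ext m w i = w ⟨i, h⟩ := dif_pos h

lemma ext_ge (m : ℕ) (w : Fin m → Fin 4) {i : ℕ} (h : ¬ i < m) :
    ext m w i = 3 := dif_neg h

lemma geom_bound (k : ℕ) : ∑ i ∈ Finset.range k, 2 * 3 ^ i = 3 ^ k - 1 := by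
  induction k with
  | zero => simp
  | succ k ih =>
    rw [Finset.sum_range_succ, ih, pow_succ]
    have : 1 ≤ 3 ^ k := Nat.one_le_pow _ _ (by norm_num)
    omega

lemma digits_sum (n : ℕ) : ∀ k : ℕ,
    ∑ i ∈ Finset.range k, (n / 3 ^ i % 3) * 3 ^ i = n % 3 ^ k := by
  intro k
  induction k with
  | zero => simp [Nat.mod_one]
  | succ k ih =>
    rw [Finset.sum_range_succ, ih, pow_succ, Nat.mod_mul]
    ring

/-! ### Bound: `gidx` maps into `Iio (4 * 3 ^ (m-1))` -/

lemma gidx_lt (m : ℕ) (hm : 1 ≤ m) (w : Fin m → Fin 4) (hw : noAdj m w) :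
    gidx m w < 4 * 3 ^ (m - 1) := by
  obtain ⟨t, rfl⟩ : ∃ t, m = t + 1 := ⟨m - 1, by omega⟩
  have hlow : ∑ i ∈ Finset.range t, contrib (t + 1) w i ≤ 3 ^ t - 1 := by
    rw [← geom_bound t]
    refine Finset.sum_le_sum fun i hi => ?_
    have hi' : i < t := Finset.mem_range.mp hi
    rw [contrib_eq]
    have hne : ext (t + 1) w (i + 1) ≠ ext (t + 1) w i := hw i (by omega)
    exact Nat.mul_le_mul_right _ (cnt_le_two _ _ hne)
  have htop : contrib (t + 1) w t ≤ 3 * 3 ^ t := by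
    rw [contrib_eq, ext_ge (t + 1) w (by omega)]
    have h1 : cnt 3 (ext (t + 1) w t) = (ext (t + 1) w t).val := cnt_three _
    have h2 : (ext (t + 1) w t).val ≤ 3 := by omega
    rw [h1]
    exact Nat.mul_le_mul_right _ h2
  have h3t : 1 ≤ 3 ^ t := Nat.one_le_pow _ _ (by norm_num)
  have : gidx (t + 1) w = (∑ i ∈ Finset.range t, contrib (t + 1) w i) + contrib (t + 1) w t :=
    Finset.sum_range_succ _ _
  simp only [Nat.add_sub_cancel]
  omega

/-! ### Strict monotonicity -/

lemma gidx_mono (m : ℕ) (c w : Fin m → Fin 4) (hc : noAdj m c)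
    (h : lexLt m c w) : gidx m c < gidx m w := by
  obtain ⟨j, hjlt, hup⟩ := h
  have hext : ∀ i : ℕ, j.val < i → ext m c i = ext m w i := by
    intro i hi
    unfold ext
    split
    · next hlt => exact hup ⟨i, hlt⟩ hi
    · rfl
  have hcon : ∀ i : ℕ, j.val < i → contrib m c i = contrib m w i := by
    intro i hi
    rw [contrib_eq, contrib_eq, hext i hi, hext (i + 1) (by omega)]
  have hsplit : ∀ x : Fin m → Fin 4,
      gidx m x = (∑ i ∈ Finset.range j.val, contrib m x i) + contrib m x j.val
        + ∑ i ∈ Finset.Ico (j.val + 1) m, contrib m x i := by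
    intro x
    have h1 : j.val + 1 ≤ m := j.isLt
    rw [gidx, Finset.range_eq_Ico, ← Finset.sum_Ico_consecutive _ (Nat.zero_le (j.val + 1)) h1,
      ← Finset.range_eq_Ico, Finset.sum_range_succ]
  have hIco : ∑ i ∈ Finset.Ico (j.val + 1) m, contrib m c i
      = ∑ i ∈ Finset.Ico (j.val + 1) m, contrib m w i := by
    refine Finset.sum_congr rfl fun i hi => ?_
    exact hcon i (by have := (Finset.mem_Ico.mp hi).1; omega)
  -- low part of c is small
  have hlow : ∑ i ∈ Finset.range j.val, contrib m c i ≤ 3 ^ j.val - 1 := by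
    rw [← geom_bound j.val]
    refine Finset.sum_le_sum fun i hi => ?_
    have hi' : i < j.val := Finset.mem_range.mp hi
    rw [contrib_eq]
    have hne : ext m c (i + 1) ≠ ext m c i := hc i (by have := j.isLt; omega)
    exact Nat.mul_le_mul_right _ (cnt_le_two _ _ hne)
  -- strict gap at position j
  have hextj : ext m c j.val = c j := by rw [ext_lt m c j.isLt]
  have hextj' : ext m w j.val = w j := by rw [ext_lt m w j.isLt]
  have hne : ext m c (j.val + 1) ≠ ext m c j.val := by
    by_cases hj : j.val + 1 < m
    · exact hc j.val hj
    · rw [ext_ge m c hj, hextj]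
      intro hcontr
      have h1 : (c j).val < (w j).val := hjlt
      have h2 : (w j).val < 4 := (w j).isLt
      have h3 : (c j).val = 3 := by
        have := congrArg Fin.val hcontr
        simpa using this.symm
      omega
  have hgap : contrib m c j.val + 3 ^ j.val ≤ contrib m w j.val := by
    rw [contrib_eq, contrib_eq, hext (j.val + 1) (by omega)]
    have hlt : ext m c j.val < ext m w j.val := by rw [hextj, hextj']; exact hjlt
    have hne' : ext m w (j.val + 1) ≠ ext m c j.val := by
      rw [← hext (j.val + 1) (by omega)]; exact hne
    have := cnt_lt (ext m w (j.val + 1)) (ext m c j.val) (ext m w j.val) hne' hlt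
    calc cnt (ext m w (j.val + 1)) (ext m c j.val) * 3 ^ j.val + 3 ^ j.val
        = (cnt (ext m w (j.val + 1)) (ext m c j.val) + 1) * 3 ^ j.val := by ring
      _ ≤ cnt (ext m w (j.val + 1)) (ext m w j.val) * 3 ^ j.val :=
          Nat.mul_le_mul_right _ this
  have h3j : 1 ≤ 3 ^ j.val := Nat.one_le_pow _ _ (by norm_num)
  rw [hsplit c, hsplit w, hIco]
  have hwlow : 0 ≤ ∑ i ∈ Finset.range j.val, contrib m w i := Nat.zero_le _
  omega

/-! ### Trichotomy of the lexicographic order -/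

lemma lex_tri (m : ℕ) (c w : Fin m → Fin 4) (h : c ≠ w) :
    lexLt m c w ∨ lexLt m w c := by
  classical
  have hne : ∃ k, c k ≠ w k := by
    by_contra hcon
    push_neg at hcon
    exact h (funext hcon)
  set S : Finset (Fin m) := Finset.univ.filter fun k => c k ≠ w k with hS
  have hSne : S.Nonempty := by
    obtain ⟨k, hk⟩ := hne
    exact ⟨k, by simp [hS, hk]⟩
  set j := S.max' hSne with hj
  have hjmem : c j ≠ w j := by
    have := S.max'_mem hSne
    simp only [hS, Finset.mem_filter] at this
    exact this.2
  have hup : ∀ k : Fin m, j < k → c k = w k := by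
    intro k hk
    by_contra hkne
    have hmem : k ∈ S := by simp [hS, hkne]
    exact absurd (S.le_max' k hmem) (not_le.mpr hk)
  rcases lt_or_gt_of_ne hjmem with hlt | hgt
  · exact Or.inl ⟨j, hlt, hup⟩
  · exact Or.inr ⟨j, hgt, fun k hk => (hup k hk).symm⟩

/-! ### Decoding: surjectivity -/

lemma dec_noAdj (m n : ℕ) : noAdj m (dec m n) := by
  intro i hi
  rw [ext_lt m _ hi, ext_lt m _ (by omega)]
  show symb m n (m - 1 - (i + 1)) ≠ symb m n (m - 1 - i)
  have h1 : m - 1 - i = (m - 1 - (i + 1)) + 1 := by omega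
  rw [h1]
  exact fun hcontr => nxt_ne _ _ hcontr.symm

lemma gidx_dec (m n : ℕ) (hm : 1 ≤ m) (hn : n < 4 * 3 ^ (m - 1)) :
    gidx m (dec m n) = n := by
  obtain ⟨t, rfl⟩ : ∃ t, m = t + 1 := ⟨m - 1, by omega⟩
  simp only [Nat.add_sub_cancel] at hn ⊢
  have hlow : ∀ i < t, contrib (t + 1) (dec (t + 1) n) i = (n / 3 ^ i % 3) * 3 ^ i := by
    intro i hi
    rw [contrib_eq, ext_lt _ _ (by omega : i + 1 < t + 1), ext_lt _ _ (by omega : i < t + 1)]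
    show cnt (symb (t+1) n (t + 1 - 1 - (i+1))) (symb (t+1) n (t + 1 - 1 - i)) * 3 ^ i = _
    have h1 : t + 1 - 1 - (i + 1) = t - i - 1 := by omega
    have h2 : t + 1 - 1 - i = (t - i - 1) + 1 := by omega
    rw [h1, h2]
    show cnt (symb (t+1) n (t - i - 1)) (nxt (symb (t+1) n (t - i - 1)) (dig n (t + 1 - 2 - (t - i - 1)))) * 3 ^ i = _
    have h3 : t + 1 - 2 - (t - i - 1) = i := by omega
    rw [h3, cnt_nxt]
    rfl
  have htop : contrib (t + 1) (dec (t + 1) n) t = (n / 3 ^ t) * 3 ^ t := by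
    rw [contrib_eq, ext_ge _ _ (by omega : ¬ t + 1 < t + 1), ext_lt _ _ (by omega : t < t + 1)]
    show cnt 3 (symb (t+1) n (t + 1 - 1 - t)) * 3 ^ t = _
    have h1 : t + 1 - 1 - t = 0 := by omega
    rw [h1, cnt_three]
    show (n / 3 ^ (t + 1 - 1) % 4) * 3 ^ t = _
    have h2 : n / 3 ^ t < 4 := by
      have h3 : 0 < 3 ^ t := Nat.pow_pos (by norm_num)
      exact Nat.div_lt_of_lt_mul (by omega)
    simp only [Nat.add_sub_cancel]
    rw [Nat.mod_eq_of_lt h2]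
  rw [gidx, Finset.sum_range_succ, htop,
    Finset.sum_congr rfl (fun i hi => hlow i (Finset.mem_range.mp hi)),
    digits_sum n t]
  exact Nat.mod_add_div' n (3 ^ t)

/-! ### Main theorem -/

/-- the `ℓ = 1` D-LOCO rule `g` is a bijection from `D_{m,1}`
onto `{0, 1, …, 4·3^(m-1) - 1}`, and it is strictly increasing with respect to
the lexicographic order on `D_{m,1}`. -/
theorem gidx_bijOn_and_strictMono (m : ℕ) (hm : 1 ≤ m) :
    Set.BijOn (gidx m) {w : Fin m → Fin 4 | noAdj m w} (Set.Iio (4 * 3 ^ (m - 1))) ∧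
    ∀ c w : Fin m → Fin 4, noAdj m c → noAdj m w → lexLt m c w →
      gidx m c < gidx m w := by
  constructor
  · refine ⟨fun w hw => gidx_lt m hm w hw, ?_, ?_⟩
    · intro c hc w hw heq
      by_contra hne
      rcases lex_tri m c w hne with hl | hl
      · exact absurd heq (Nat.ne_of_lt (gidx_mono m c w hc hl))
      · exact absurd heq.symm (Nat.ne_of_lt (gidx_mono m w c hw hl))
    · intro n hn
      exact ⟨dec m n, dec_noAdj m n, gidx_dec m n hm hn⟩
  · intro c w hc _ hl
    exact gidx_mono m c w hc hl
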